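/- If L ⊆ M_l(ℂ) is a transitive subspace which is spanned by its rank-one elements, then the span of all products AB with A, B ∈ L equals M_l(ℂ). -/

import Mathlib

open Matrix

lemma rank_one_decomp' {l : ℕ} {A : Matrix (Fin l) (Fin l) ℂ} (h : A.rank = 1) :
    ∃ u w : Fin l → ℂ, u ≠ 0 ∧ A = vecMulVec u w := by
  rw [Matrix.rank] at h
  obtain ⟨v, hv0, hv⟩ := finrank_eq_one_iff'.mp h
  choose c hc using fun j =>
    hv ⟨A.mulVec (Pi.single j 1), LinearMap.mem_range.2 ⟨Pi.single j 1, rfl⟩⟩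
  refine ⟨v.1, c, fun h0 => hv0 (Subtype.ext h0), ?_⟩
  ext i j
  have h' := congrFun (congrArg Subtype.val (hc j)) i
  simp only [Submodule.coe_smul, Pi.smul_apply, Matrix.mulVec_single, smul_eq_mul,
    mul_one, MulOpposite.op_one, one_smul, Matrix.col_apply] at h'
  simp [vecMulVec_apply, ← h', mul_comm]

/-- If `L ⊆ M_l(ℂ)` is transitive and spanned by its rank-one elements, then the
span of products of two elements of `L` is all of `M_l(ℂ)`. -/
theorem span_sq_eq_top (l : ℕ)
    (L : Submodule ℂ (Matrix (Fin l) (Fin l) ℂ))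
    (htrans : ∀ x : Fin l → ℂ, x ≠ 0 → ∀ y : Fin l → ℂ, ∃ A ∈ L, A.mulVec x = y)
    (hspan : L = Submodule.span ℂ {A : Matrix (Fin l) (Fin l) ℂ | A ∈ L ∧ A.rank = 1}) :
    Submodule.span ℂ {C : Matrix (Fin l) (Fin l) ℂ | ∃ A ∈ L, ∃ B ∈ L, C = A * B} = ⊤ := by
  set S := Submodule.span ℂ {C : Matrix (Fin l) (Fin l) ℂ | ∃ A ∈ L, ∃ B ∈ L, C = A * B}
    with hS
  set T : Set (Fin l → ℂ) := {w | ∃ u, u ≠ 0 ∧ vecMulVec u w ∈ L} with hT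
  -- Step 1: for w ∈ T and any y, the matrix y wᵀ lies in S
  have h1 : ∀ w ∈ T, ∀ y : Fin l → ℂ, vecMulVec y w ∈ S := by
    rintro w ⟨u, hu, huw⟩ y
    obtain ⟨B, hB, hBu⟩ := htrans u hu y
    have hprod : B * vecMulVec u w = vecMulVec y w := by
      ext i j
      simp only [mul_apply, vecMulVec_apply, ← hBu, mulVec, dotProduct]
      rw [Finset.sum_mul]
      exact Finset.sum_congr rfl fun k _ => by ring
    exact hprod ▸ Submodule.subset_span ⟨B, hB, _, huw, rfl⟩
  -- Step 2: T spans everything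
  have h2 : Submodule.span ℂ T = ⊤ := by
    by_contra hTtop
    obtain ⟨f, hf0, hf⟩ := Submodule.exists_dual_map_eq_bot_of_lt_top
      (p := Submodule.span ℂ T) (lt_top_iff_ne_top.2 hTtop) inferInstance
    set x : Fin l → ℂ := fun j => f (Pi.single j 1) with hx
    have hfx : ∀ w : Fin l → ℂ, w ⬝ᵥ x = f w := by
      intro w
      have hw : w = ∑ j, w j • (Pi.single j 1 : Fin l → ℂ) := by
        ext i; simp [Pi.single_apply, eq_comm]
      conv_rhs => rw [hw]
      simp [dotProduct, hx]
    have hxne : x ≠ 0 := by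
      intro h0
      apply hf0
      apply LinearMap.ext
      intro v
      rw [← hfx v, h0]
      simp
    have hkill : ∀ A ∈ L, A.mulVec x = 0 := by
      intro A hA
      rw [hspan] at hA
      induction hA using Submodule.span_induction with
      | mem A hA =>
        obtain ⟨hAL, hAr⟩ := hA
        obtain ⟨u, w, hu, rfl⟩ := rank_one_decomp' hAr
        have hwT : w ∈ T := ⟨u, hu, hAL⟩
        have hfw : f w = 0 := by
          have : f w ∈ (Submodule.span ℂ T).map f :=
            ⟨w, Submodule.subset_span hwT, rfl⟩
          rw [hf] at this
          simpa using this
        ext i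
        simp only [mulVec, dotProduct, vecMulVec_apply, Pi.zero_apply]
        calc ∑ j, u i * w j * x j = u i * (w ⬝ᵥ x) := by
              rw [dotProduct, Finset.mul_sum]
              exact Finset.sum_congr rfl fun k _ => by ring
          _ = 0 := by rw [hfx, hfw, mul_zero]
      | zero => simp
      | add A B _ _ hA hB => rw [add_mulVec, hA, hB, add_zero]
      | smul c A _ hA => rw [smul_mulVec, hA, smul_zero]
    obtain ⟨A, hA, hAx⟩ := htrans x hxne x
    exact hxne (hAx ▸ hkill A hA)
  -- Step 3: deduce every vecMulVec y w ∈ S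
  have h3 : ∀ (y w : Fin l → ℂ), vecMulVec y w ∈ S := by
    intro y w
    have hmem : w ∈ Submodule.span ℂ T := h2 ▸ Submodule.mem_top
    induction hmem using Submodule.span_induction with
    | mem w hw => exact h1 w hw y
    | zero =>
      have : vecMulVec y (0 : Fin l → ℂ) = 0 := by ext i j; simp [vecMulVec_apply]
      rw [this]; exact Submodule.zero_mem S
    | add a b _ _ ha hb =>
      have : vecMulVec y (a + b) = vecMulVec y a + vecMulVec y b := by
        ext i j; simp [vecMulVec_apply, mul_add]
      rw [this]; exact Submodule.add_mem S ha hb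
    | smul c a _ ha =>
      have : vecMulVec y (c • a) = c • vecMulVec y a := by
        ext i j; simp [vecMulVec_apply]; ring
      rw [this]; exact Submodule.smul_mem S c ha
  -- conclude
  rw [eq_top_iff]
  intro M _
  have hM : M = ∑ j, vecMulVec (fun i => M i j) (Pi.single j 1) := by
    ext i j
    simp [Matrix.sum_apply, vecMulVec_apply, Pi.single_apply]
  rw [hM]
  exact Submodule.sum_mem S fun j _ => h3 _ _
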